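/- Suppose 1 ≤ n ≤ q and let V_c ∈ (0,d0) satisfy Λ(V_c) = 0 and Λ'(V_c) > 0. Then there exists ε > 0 such that for every δ* ∈ (0,ε) there exists τ0 ≥ t0 such that every admissible solution v with v(τ0) = V_c + δ* satisfies |v(t) − V_c| ≥ ε for some t ≥ τ0. -/

import Mathlib

/-- An admissible solution of the reduced equation
`v'(t) = t^{−n/q}·Λ(v(t)) + ρ(t)` on `[τ0,∞)` with values in `[0,d0]`, where
`|ρ(t)| ≤ M·t^{−(n+1)/q}`. -/
def IsAdmissibleCycle (q n : ℕ) (d0 M τ0 : ℝ) (Λ : ℝ → ℝ) (v : ℝ → ℝ) : Prop :=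
  (∀ t ≥ τ0, v t ∈ Set.Icc (0:ℝ) d0) ∧
  ∃ ρ : ℝ → ℝ,
    (∀ t ≥ τ0, |ρ t| ≤ M * t ^ (-((n:ℝ) + 1)/(q:ℝ))) ∧
    (∀ t ≥ τ0, HasDerivAt v (t ^ (-(n:ℝ)/(q:ℝ)) * Λ (v t) + ρ t) t)

open Set Filter Topology

/-- Barrier lemma: if a differentiable function starts at or above `a` and has strictly
positive derivative whenever it equals `a`, it stays at or above `a`. -/
lemma stays_above {v g : ℝ → ℝ} {τ0 a : ℝ}
    (hd : ∀ t ≥ τ0, HasDerivAt v (g t) t)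
    (h0 : a ≤ v τ0)
    (hpos : ∀ t ≥ τ0, v t = a → 0 < g t) :
    ∀ t ≥ τ0, a ≤ v t := by
  intro t1 ht1
  by_contra hlt
  push_neg at hlt
  have hτt : τ0 < t1 := by
    rcases eq_or_lt_of_le ht1 with h | h
    · exact absurd (h ▸ h0) (not_le.2 hlt)
    · exact h
  have hcont : ContinuousOn v (Icc τ0 t1) :=
    fun x hx => (hd x hx.1).continuousAt.continuousWithinAt
  set S : Set ℝ := Icc τ0 t1 ∩ v ⁻¹' Ici a with hSdef
  have hSclosed : IsClosed S :=
    hcont.preimage_isClosed_of_isClosed isClosed_Icc isClosed_Ici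
  have hSne : S.Nonempty := ⟨τ0, ⟨le_refl _, hτt.le⟩, h0⟩
  have hSbdd : BddAbove S := ⟨t1, fun x hx => hx.1.2⟩
  set s := sSup S with hs
  have hsS : s ∈ S := hSclosed.csSup_mem hSne hSbdd
  have hs1 : τ0 ≤ s := hsS.1.1
  have hs2 : s ≤ t1 := hsS.1.2
  have hsa : a ≤ v s := hsS.2
  have hst : s < t1 := by
    rcases eq_or_lt_of_le hs2 with h | h
    · exact absurd (h ▸ hsa) (not_le.2 hlt)
    · exact h
  have habove : ∀ t, s < t → t ≤ t1 → v t < a := by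
    intro t h1 h2
    by_contra h
    push_neg at h
    have hmem : t ∈ S := ⟨⟨hs1.trans h1.le, h2⟩, h⟩
    exact absurd (le_csSup hSbdd hmem) (not_le.2 h1)
  rcases eq_or_lt_of_le hsa with heq | hgt
  · -- v s = a : use the positive derivative via slope
    have hgs : 0 < g s := hpos s hs1 heq.symm
    have hslope : Tendsto (slope v s) (𝓝[≠] s) (𝓝 (g s)) :=
      hasDerivAt_iff_tendsto_slope.1 (hd s hs1)
    have hev : {t | 0 < slope v s t} ∈ 𝓝[≠] s := hslope (Ioi_mem_nhds hgs)
    have hle : 𝓝[>] s ≤ 𝓝[≠] s :=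
      nhdsWithin_mono s (fun x hx => ne_of_gt hx)
    have hioc : Ioc s t1 ∈ 𝓝[>] s := Ioc_mem_nhdsGT hst
    obtain ⟨t, ht1', ht2'⟩ := Filter.nonempty_of_mem (Filter.inter_mem (hle hev) hioc)
    have hts : 0 < t - s := sub_pos.2 ht2'.1
    have h0' : 0 < slope v s t := ht1'
    rw [slope_def_field] at h0'
    have hvt : 0 < v t - v s := by
      have := mul_pos h0' hts
      rwa [div_mul_cancel₀ _ (ne_of_gt hts)] at this
    have := habove t ht2'.1 ht2'.2
    linarith [heq]
  · -- a < v s : continuity keeps v above a just to the right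
    have hca : ContinuousAt v s := (hd s hs1).continuousAt
    have hev : v ⁻¹' Ioi a ∈ 𝓝 s := hca.preimage_mem_nhds (Ioi_mem_nhds hgt)
    have hioc : Ioc s t1 ∈ 𝓝[>] s := Ioc_mem_nhdsGT hst
    obtain ⟨t, ht1', ht2'⟩ := Filter.nonempty_of_mem
      (Filter.inter_mem (nhdsWithin_le_nhds hev) hioc)
    exact absurd (habove t ht2'.1 ht2'.2) (not_lt.2 (le_of_lt ht1'))

/-- if `1 ≤ n ≤ q` and `V_c ∈ (0,d0)` is a zero of `Λ` with
`Λ'(V_c) > 0`, then `V_c` is repelling: solutions starting at `V_c + δ*`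
leave an `ε`-neighbourhood of `V_c`. -/
theorem unstable_limit_cycle
    (q n : ℕ) (hq : 0 < q) (hn : 1 ≤ n) (hnq : n ≤ q)
    (d0 t0 M : ℝ) (hd0 : 0 < d0) (ht0 : 0 < t0) (hM : 0 < M)
    (Λ : ℝ → ℝ) (hΛ : ContDiffOn ℝ 1 Λ (Set.Icc (0:ℝ) d0))
    (Vc : ℝ) (hVc : Vc ∈ Set.Ioo (0:ℝ) d0) (hΛVc : Λ Vc = 0)
    (hΛ' : 0 < deriv Λ Vc) :
    ∃ ε > 0, ∀ δs ∈ Set.Ioo (0:ℝ) ε, ∃ τ0 ≥ t0,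
      ∀ v : ℝ → ℝ, IsAdmissibleCycle q n d0 M τ0 Λ v → v τ0 = Vc + δs →
        ∃ t ≥ τ0, ε ≤ |v t - Vc| := by
  set L := deriv Λ Vc with hLdef
  have hdiff : DifferentiableAt ℝ Λ Vc :=
    (hΛ.differentiableOn one_ne_zero).differentiableAt (Icc_mem_nhds hVc.1 hVc.2)
  have hder : HasDerivAt Λ L Vc := hdiff.hasDerivAt
  have ho := hasDerivAt_iff_isLittleO.1 hder
  have hev := ho.def (half_pos hΛ')
  rw [Metric.eventually_nhds_iff] at hev
  obtain ⟨ε1, hε1, hball⟩ := hev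
  have hΛlow : ∀ x, Vc ≤ x → |x - Vc| < ε1 → L / 2 * (x - Vc) ≤ Λ x := by
    intro x hx hxe
    have hb := hball (show dist x Vc < ε1 by rwa [Real.dist_eq])
    rw [hΛVc, smul_eq_mul, Real.norm_eq_abs, Real.norm_eq_abs, sub_zero,
      abs_of_nonneg (sub_nonneg.2 hx)] at hb
    have h2 := (abs_le.1 hb).1
    nlinarith
  refine ⟨ε1 / 2, half_pos hε1, ?_⟩
  intro δs hδs
  set c0 : ℝ := L / 2 * δs with hc0def
  have hc0 : 0 < c0 := mul_pos (half_pos hΛ') hδs.1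
  set τ0 : ℝ := max t0 (max 1 ((2 * M / c0) ^ q)) with hτdef
  refine ⟨τ0, le_max_left _ _, ?_⟩
  intro v hv hv0
  obtain ⟨hrange, ρ, hρ, hdv⟩ := hv
  by_contra hcon
  push_neg at hcon
  have hτ1 : (1:ℝ) ≤ τ0 := le_trans (le_max_left 1 _) (le_max_right t0 _)
  have hτM : (2 * M / c0) ^ q ≤ τ0 := le_trans (le_max_right 1 _) (le_max_right t0 _)
  have hτpos : (0:ℝ) < τ0 := lt_of_lt_of_le one_pos hτ1
  -- key derivative lower bound
  have hg : ∀ t ≥ τ0, Vc + δs ≤ v t →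
      (c0 / 2) / t ≤ t ^ (-(n:ℝ)/(q:ℝ)) * Λ (v t) + ρ t := by
    intro t ht hvt
    have ht1 : (1:ℝ) ≤ t := hτ1.trans ht
    have htpos : (0:ℝ) < t := lt_of_lt_of_le one_pos ht1
    have hΛv : c0 ≤ Λ (v t) := by
      have h1 : Vc ≤ v t := by linarith [hδs.1]
      have h2 : |v t - Vc| < ε1 := lt_of_lt_of_le (hcon t ht) (by linarith)
      have h3 := hΛlow (v t) h1 h2
      have h4 : L / 2 * δs ≤ L / 2 * (v t - Vc) := by nlinarith [half_pos hΛ']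
      linarith
    -- remainder bound
    have hρt : -((c0 / 2) * t ^ (-(n:ℝ)/(q:ℝ))) ≤ ρ t := by
      have hb := hρ t ht
      have hq' : (0:ℝ) < (q:ℝ) := by exact_mod_cast hq
      have hsplit : t ^ (-((n:ℝ) + 1)/(q:ℝ))
          = t ^ (-(n:ℝ)/(q:ℝ)) * t ^ (-(1:ℝ)/(q:ℝ)) := by
        rw [← Real.rpow_add htpos]
        ring_nf
      have h2Mc : 2 * M / c0 ≤ t ^ ((1:ℝ)/(q:ℝ)) := by
        have hpos' : (0:ℝ) < 2 * M / c0 := by positivity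
        have hle : ((2 * M / c0) ^ q : ℝ) ≤ t := hτM.trans ht
        have := Real.rpow_le_rpow (by positivity) hle (by positivity : (0:ℝ) ≤ 1 / (q:ℝ))
        rwa [← Real.rpow_natCast (2 * M / c0) q, ← Real.rpow_mul hpos'.le,
          mul_one_div, div_self (ne_of_gt hq'), Real.rpow_one] at this
      have hrq : (0:ℝ) < t ^ ((1:ℝ)/(q:ℝ)) := Real.rpow_pos_of_pos htpos _
      have hM1 : M * t ^ (-(1:ℝ)/(q:ℝ)) ≤ c0 / 2 := by
        have hneg : t ^ (-(1:ℝ)/(q:ℝ)) = (t ^ ((1:ℝ)/(q:ℝ)))⁻¹ := by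
          rw [neg_div, Real.rpow_neg htpos.le]
        rw [hneg]
        rw [div_le_iff₀ hc0 ] at h2Mc
        rw [mul_inv_le_iff₀ hrq]
        nlinarith
      have hrn : (0:ℝ) < t ^ (-(n:ℝ)/(q:ℝ)) := Real.rpow_pos_of_pos htpos _
      have hb2 : M * t ^ (-((n:ℝ) + 1)/(q:ℝ)) ≤ c0 / 2 * t ^ (-(n:ℝ)/(q:ℝ)) := by
        rw [hsplit]
        calc M * (t ^ (-(n:ℝ)/(q:ℝ)) * t ^ (-(1:ℝ)/(q:ℝ)))
            = (M * t ^ (-(1:ℝ)/(q:ℝ))) * t ^ (-(n:ℝ)/(q:ℝ)) := by ring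
          _ ≤ c0 / 2 * t ^ (-(n:ℝ)/(q:ℝ)) :=
              mul_le_mul_of_nonneg_right hM1 hrn.le
      have := (abs_le.1 hb).1
      linarith
    have hrn : (0:ℝ) < t ^ (-(n:ℝ)/(q:ℝ)) := Real.rpow_pos_of_pos htpos _
    have hmain : c0 / 2 * t ^ (-(n:ℝ)/(q:ℝ))
        ≤ t ^ (-(n:ℝ)/(q:ℝ)) * Λ (v t) + ρ t := by
      nlinarith [mul_le_mul_of_nonneg_left hΛv hrn.le]
    have hrt : t⁻¹ ≤ t ^ (-(n:ℝ)/(q:ℝ)) := by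
      have hq' : (0:ℝ) < (q:ℝ) := by exact_mod_cast hq
      have hexp : (n:ℝ)/(q:ℝ) ≤ 1 := by
        rw [div_le_one hq']
        exact_mod_cast hnq
      have h1 : t ^ ((n:ℝ)/(q:ℝ)) ≤ t := by
        have := Real.rpow_le_rpow_of_exponent_le ht1 hexp
        rwa [Real.rpow_one] at this
      have h2 : t ^ (-(n:ℝ)/(q:ℝ)) = (t ^ ((n:ℝ)/(q:ℝ)))⁻¹ := by
        rw [neg_div, Real.rpow_neg htpos.le]
      rw [h2]
      exact inv_anti₀ (Real.rpow_pos_of_pos htpos _) h1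
    calc (c0 / 2) / t = c0 / 2 * t⁻¹ := by rw [div_eq_mul_inv]
      _ ≤ c0 / 2 * t ^ (-(n:ℝ)/(q:ℝ)) := mul_le_mul_of_nonneg_left hrt (by positivity)
      _ ≤ _ := hmain
  -- barrier: v stays above Vc + δs
  have hbar : ∀ t ≥ τ0, Vc + δs ≤ v t := by
    refine stays_above hdv (by rw [hv0]) ?_
    intro t ht heq
    have htpos : (0:ℝ) < t := lt_of_lt_of_le hτpos ht
    have := hg t ht (le_of_eq heq.symm)
    have hpos : (0:ℝ) < (c0 / 2) / t := by positivity
    linarith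
  -- derivative bound everywhere
  have hgall : ∀ t ≥ τ0, (c0 / 2) / t ≤ deriv v t := by
    intro t ht
    rw [(hdv t ht).deriv]
    exact hg t ht (hbar t ht)
  -- growth on doubling intervals
  have hgrow : ∀ T, τ0 ≤ T → v T + c0 / 4 ≤ v (2 * T) := by
    intro T hT
    have hTpos : 0 < T := lt_of_lt_of_le hτpos hT
    have hT2 : T ≤ 2 * T := by linarith
    have hconv : Convex ℝ (Icc T (2 * T)) := convex_Icc _ _
    have hcont : ContinuousOn v (Icc T (2 * T)) :=
      fun x hx => (hdv x (hT.trans hx.1)).continuousAt.continuousWithinAt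
    have hdiffv : DifferentiableOn ℝ v (interior (Icc T (2 * T))) := by
      intro x hx
      rw [interior_Icc] at hx
      exact ((hdv x (hT.trans hx.1.le)).differentiableAt).differentiableWithinAt
    have hderge : ∀ x ∈ interior (Icc T (2 * T)), (c0 / 2) / (2 * T) ≤ deriv v x := by
      intro x hx
      rw [interior_Icc] at hx
      have hx0 : 0 < x := hTpos.trans hx.1
      have h1 : (c0 / 2) / (2 * T) ≤ (c0 / 2) / x := by
        apply div_le_div_of_nonneg_left (by positivity) hx0
        linarith [hx.2]
      exact h1.trans (hgall x (hT.trans hx.1.le))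
    have := hconv.mul_sub_le_image_sub_of_le_deriv hcont hdiffv hderge
      T (left_mem_Icc.2 hT2) (2 * T) (right_mem_Icc.2 hT2) hT2
    have heq : (c0 / 2) / (2 * T) * (2 * T - T) = c0 / 4 := by
      field_simp
      ring
    rw [heq] at this
    linarith
  -- iterate
  have hpow : ∀ k : ℕ, τ0 ≤ 2 ^ k * τ0 := by
    intro k
    nlinarith [(one_le_pow₀ (by norm_num : (1:ℝ) ≤ 2) : (1:ℝ) ≤ 2 ^ k), hτpos]
  have hiter : ∀ k : ℕ, v τ0 + k * (c0 / 4) ≤ v (2 ^ k * τ0) := by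
    intro k
    induction k with
    | zero => simp
    | succ k ih =>
      have h1 := hgrow (2 ^ k * τ0) (hpow k)
      have heq : (2:ℝ) ^ (k + 1) * τ0 = 2 * (2 ^ k * τ0) := by ring
      rw [heq]
      push_cast
      linarith
  obtain ⟨k, hk⟩ := exists_nat_gt ((d0 - v τ0) / (c0 / 4))
  have hk' : d0 - v τ0 < k * (c0 / 4) := by
    rwa [div_lt_iff₀ (by positivity)] at hk
  have hub : v (2 ^ k * τ0) ≤ d0 := (hrange (2 ^ k * τ0) (hpow k)).2
  have := hiter k
  linarith
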